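/- For every n ≥ 1 there exists an acyclic regular tree grammar G with 2n production rules such that |L(G)| = n^(n^n). -/

import Mathlib

/-- Terms (trees) over a ranked alphabet `F` and non-terminals `N`. -/
inductive Tm (F N : Type) : Type
  | func : F → List (Tm F N) → Tm F N
  | nt : N → Tm F N

namespace Tm

variable {F N N' : Type}

/-- The subterm of a term at a position (a list of natural numbers), if it exists. -/
def at? : Tm F N → List Nat → Option (Tm F N)
  | t, [] => some t
  | nt _, _ :: _ => none
  | func _ args, i :: p =>
      match args[i]? with
      | some a => a.at? p
      | none => none
  termination_by t p => p.length

/-- The non-terminal `β` occurs at position `p` in a term. -/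
inductive OccursAt (β : N) : Tm F N → List Nat → Prop
  | here : OccursAt β (nt β) []
  | there {f : F} {args : List (Tm F N)} {i : Nat} {a : Tm F N} {p : List Nat} :
      args[i]? = some a → OccursAt β a p → OccursAt β (func f args) (i :: p)

/-- The non-terminal `β` occurs in the term `t`. -/
def Occurs (β : N) (t : Tm F N) : Prop := ∃ p, OccursAt β t p

/-- A term is ground if it contains no non-terminals. -/
inductive IsGround : Tm F N → Prop
  | func {f : F} {args : List (Tm F N)} : (∀ a ∈ args, IsGround a) → IsGround (func f args)

/-- Substitution of the term `s` for the non-terminal `β`. -/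
def subst [DecidableEq N] (β : N) (s : Tm F N) : Tm F N → Tm F N
  | nt γ => if γ = β then s else nt γ
  | func f args => func f (args.attach.map fun a => subst β s a.1)
  decreasing_by all_goals (simp only [Tm.func.sizeOf_spec]; have := List.sizeOf_lt_of_mem a.2; omega)

/-- Renaming of non-terminals. -/
def mapNT (σ : N → N') : Tm F N → Tm F N'
  | nt γ => nt (σ γ)
  | func f args => func f (args.attach.map fun a => mapNT σ a.1)
  decreasing_by all_goals (simp only [Tm.func.sizeOf_spec]; have := List.sizeOf_lt_of_mem a.2; omega)

/-- The size (number of symbol occurrences) of a term. -/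
def size : Tm F N → Nat
  | nt _ => 1
  | func _ args => 1 + (args.attach.map fun a => size a.1).sum
  decreasing_by all_goals (simp only [Tm.func.sizeOf_spec]; have := List.sizeOf_lt_of_mem a.2; omega)

end Tm

/-- One rewrite step using the single production `pr`: replace one occurrence of the
    left-hand side non-terminal by the right-hand side. -/
inductive ProdStep {F N : Type} : (N × Tm F N) → Tm F N → Tm F N → Prop
  | here {β : N} {t : Tm F N} : ProdStep (β, t) (Tm.nt β) t
  | inArg {pr : N × Tm F N} {f : F} {args : List (Tm F N)} {i : Nat} {a b : Tm F N} :
      args[i]? = some a → ProdStep pr a b → ProdStep pr (Tm.func f args) (Tm.func f (args.set i b))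

/-- A rigid tree grammar: a set of rigid non-terminals, a start symbol and a set of
    productions.  (Taking `rigid = ∅` gives a plain regular tree grammar;
    `rigid = Set.univ` a totally rigid one.) -/
structure RTG (F N : Type) where
  rigid : Set N
  start : N
  prods : Set (N × Tm F N)

/-- A derivation of the term `t` in the grammar `G`: a sequence of terms starting with the
    start symbol and ending with `t`, each step rewriting by a production of `G`
    (the list `prs` records which production is used at each step). -/
structure Deriv {F N : Type} (G : RTG F N) (t : Tm F N) where
  prs : List (N × Tm F N)
  seq : List (Tm F N)
  len : seq.length = prs.length + 1
  head : seq.head? = some (Tm.nt G.start)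
  last : seq.getLast? = some t
  mem : ∀ pr ∈ prs, pr ∈ G.prods
  steps : ∀ (i : Nat) (a b : Tm F N) (pr : N × Tm F N),
      seq[i]? = some a → seq[i + 1]? = some b → prs[i]? = some pr → ProdStep pr a b

namespace Deriv

variable {F N : Type} {G : RTG F N} {t : Tm F N}

/-- `p` is a `β`-position of the derivation `D`. -/
def IsPos (D : Deriv G t) (β : N) (p : List Nat) : Prop :=
  ∃ s ∈ D.seq, Tm.OccursAt β s p

/-- The rigidity condition: all positions at which a rigid non-terminal occurs during the
    derivation carry equal subterms of the final term. -/
def Rigid (D : Deriv G t) : Prop :=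
  ∀ β ∈ G.rigid, ∀ p q, D.IsPos β p → D.IsPos β q → t.at? p = t.at? q

end Deriv

/-- The language of a rigid tree grammar: ground terms derivable from the start symbol by a
    derivation satisfying the rigidity condition. -/
def RTG.Lang {F N : Type} (G : RTG F N) : Set (Tm F N) :=
  { t | t.IsGround ∧ ∃ D : Deriv G t, D.Rigid }

/-- The language of the underlying regular tree grammar (no rigidity condition). -/
def RTG.RegLang {F N : Type} (G : RTG F N) : Set (Tm F N) :=
  { t | t.IsGround ∧ Nonempty (Deriv G t) }

/-- One-step reachability between non-terminals: `α →_P β` iff some production `α → t` in `P`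
    has `β` occurring in `t`. -/
def Reach {F N : Type} (P : Set (N × Tm F N)) (α β : N) : Prop :=
  ∃ t, (α, t) ∈ P ∧ Tm.Occurs β t

/-- A set of productions is acyclic if the transitive closure of `→_P` is irreflexive. -/
def Acyclic {F N : Type} (P : Set (N × Tm F N)) : Prop :=
  ∀ α, ¬ Relation.TransGen (Reach P) α α


section Aux

open Relation

noncomputable instance : DecidableEq (Tm ℕ ℕ) := Classical.decEq _

/-- One rewrite step by some production of `P`. -/
def Step {F N : Type} (P : Set (N × Tm F N)) (a b : Tm F N) : Prop :=
  ∃ pr ∈ P, ProdStep pr a b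

lemma deriv_iff {F N : Type} (G : RTG F N) (t : Tm F N) :
    Nonempty (Deriv G t) ↔ Relation.ReflTransGen (Step G.prods) (Tm.nt G.start) t := by
  constructor
  · rintro ⟨D⟩
    have key : ∀ k, k < D.seq.length →
        ∀ a, D.seq[k]? = some a → Relation.ReflTransGen (Step G.prods) (Tm.nt G.start) a := by
      intro k
      induction k with
      | zero =>
        intro _ a ha
        have h0 : D.seq.head? = D.seq[0]? := by
          cases D.seq with
          | nil => simp
          | cons x l => simp
        rw [D.head] at h0
        rw [← h0] at ha
        injection ha with h; rw [← h]
      | succ k ih =>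
        intro hk a ha
        have hk' : k < D.seq.length := Nat.lt_of_succ_lt hk
        obtain ⟨b, hb⟩ : ∃ b, D.seq[k]? = some b := ⟨D.seq[k], List.getElem?_eq_getElem hk'⟩
        have hkp : k < D.prs.length := by have := D.len; omega
        obtain ⟨pr, hpr⟩ : ∃ pr, D.prs[k]? = some pr :=
          ⟨D.prs[k], List.getElem?_eq_getElem hkp⟩
        have hstep : ProdStep pr b a := D.steps k b a pr hb ha hpr
        have hmem : pr ∈ G.prods := by
          refine D.mem pr ?_
          obtain ⟨hl, he⟩ := List.getElem?_eq_some_iff.mp hpr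
          exact he ▸ List.getElem_mem hl
        exact (ih hk' b hb).tail ⟨pr, hmem, hstep⟩
    have hlen : 0 < D.seq.length := by rw [D.len]; omega
    have hlast : D.seq[D.seq.length - 1]? = some t := by
      rw [← List.getLast?_eq_getElem?]; exact D.last
    exact key (D.seq.length - 1) (by omega) t hlast
  · intro h
    induction h with
    | refl =>
      exact ⟨⟨[], [Tm.nt G.start], by simp, by simp, by simp, by simp,
        by intro i a b pr _ _ hpr; simp at hpr⟩⟩
    | @tail b c _ hstep ih =>
      obtain ⟨D⟩ := ih
      obtain ⟨pr, hmem, hps⟩ := hstep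
      have hlenpos : 0 < D.seq.length := by rw [D.len]; omega
      have hlastb : D.seq[D.prs.length]? = some b := by
        have := D.last
        rw [List.getLast?_eq_getElem?] at this
        rw [D.len] at this; simpa using this
      refine ⟨⟨D.prs ++ [pr], D.seq ++ [c], by simp [D.len], ?_, ?_, ?_, ?_⟩⟩
      · obtain ⟨x, l, hs⟩ : ∃ x l, D.seq = x :: l := by
          cases hseq : D.seq with
          | nil => rw [hseq] at hlenpos; simp at hlenpos
          | cons x l => exact ⟨x, l, rfl⟩
        have hh := D.head
        rw [hs] at hh ⊢
        simpa using hh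
      · simp
      · intro q hq
        rcases List.mem_append.1 hq with h | h
        · exact D.mem q h
        · simp at h; subst h; exact hmem
      · intro i a' b' pr' ha' hb' hpr'
        have hiub : i < D.prs.length + 1 := by
          by_contra hcon
          rw [List.getElem?_eq_none (by simp; omega)] at hpr'
          exact Option.some_ne_none _ hpr'.symm
        rcases Nat.lt_or_ge i D.prs.length with hi | hi
        · have hseqa : D.seq[i]? = some a' := by
            rw [List.getElem?_append_left (by rw [D.len]; omega)] at ha'; exact ha'
          have hseqb : D.seq[i+1]? = some b' := by
            rw [List.getElem?_append_left (by rw [D.len]; omega)] at hb'; exact hb'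
          have hprs : D.prs[i]? = some pr' := by
            rw [List.getElem?_append_left hi] at hpr'; exact hpr'
          exact D.steps i a' b' pr' hseqa hseqb hprs
        · have hieq : i = D.prs.length := by omega
          subst hieq
          have ha'' : a' = b := by
            rw [List.getElem?_append_left (by rw [D.len]; omega)] at ha'
            rw [hlastb] at ha'; injection ha' with h; exact h.symm
          have hb'' : b' = c := by
            rw [List.getElem?_append_right (by rw [D.len]; try omega)] at hb'
            rw [D.len] at hb'; simp at hb'; exact hb'.symm
          have hpr'' : pr' = pr := by
            rw [List.getElem?_append_right (le_refl _)] at hpr'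
            simp at hpr'; exact hpr'.symm
          rw [ha'', hb'', hpr'']; exact hps

lemma prodStep_func {F N : Type} {pr : N × Tm F N} {f : F} {args : List (Tm F N)} {t : Tm F N}
    (h : ProdStep pr (Tm.func f args) t) :
    ∃ i a b, args[i]? = some a ∧ ProdStep pr a b ∧ t = Tm.func f (args.set i b) := by
  cases h with
  | inArg hi hs => exact ⟨_, _, _, hi, hs, rfl⟩

lemma prodStep_nt {F N : Type} {pr : N × Tm F N} {β : N} {t : Tm F N}
    (h : ProdStep pr (Tm.nt β) t) : pr = (β, t) := by
  cases h; rfl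

lemma der_func {F N : Type} {P : Set (N × Tm F N)} {f : F} {args : List (Tm F N)} {t : Tm F N}
    (h : Relation.ReflTransGen (Step P) (Tm.func f args) t) :
    ∃ args', t = Tm.func f args' ∧ args'.length = args.length ∧
      ∀ (i : ℕ) a a', args[i]? = some a → args'[i]? = some a' →
        Relation.ReflTransGen (Step P) a a' := by
  induction h with
  | refl =>
    exact ⟨args, rfl, rfl, fun i a a' h1 h2 => by
      rw [h1] at h2; injection h2 with h; rw [h]⟩
  | tail _ hstep ih =>
    obtain ⟨args', rfl, hlen, hpt⟩ := ih
    obtain ⟨pr, hmem, hps⟩ := hstep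
    obtain ⟨i, a, b, hi, hs, rfl⟩ := prodStep_func hps
    refine ⟨args'.set i b, rfl, by simp [hlen], ?_⟩
    intro j x x' h1 h2
    rcases eq_or_ne j i with rfl | hne
    · have hjlt : j < args'.length := (List.getElem?_eq_some_iff.mp hi).1
      rw [List.getElem?_set_self hjlt] at h2
      injection h2 with h
      exact (hpt j x a h1 hi).tail ⟨pr, hmem, h ▸ hs⟩
    · rw [List.getElem?_set_ne (Ne.symm hne)] at h2
      exact hpt j x x' h1 h2

lemma der_set {F N : Type} {P : Set (N × Tm F N)} {f : F} {args : List (Tm F N)} {i : ℕ}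
    {a b : Tm F N} (hi : args[i]? = some a)
    (h : Relation.ReflTransGen (Step P) a b) :
    Relation.ReflTransGen (Step P) (Tm.func f args) (Tm.func f (args.set i b)) := by
  induction h with
  | refl =>
    have : args.set i a = args := by
      apply List.ext_getElem?
      intro j
      rcases eq_or_ne j i with rfl | hne
      · rw [List.getElem?_set_self (List.getElem?_eq_some_iff.mp hi).1, hi]
      · rw [List.getElem?_set_ne (Ne.symm hne)]
    rw [this]
  | @tail b1 b2 _ hstep ih =>
    refine ih.tail ?_
    obtain ⟨pr, hmem, hps⟩ := hstep
    have hlt : i < args.length := (List.getElem?_eq_some_iff.mp hi).1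
    have h1 : (args.set i b1)[i]? = some b1 := by
      rw [List.getElem?_set_self (by simpa using hlt)]
    have := ProdStep.inArg (pr := pr) (f := f) h1 hps
    rw [List.set_set] at this
    exact ⟨pr, hmem, this⟩

lemma der_congr_aux {F N : Type} {P : Set (N × Tm F N)} {f : F} :
    ∀ (args args' pre : List (Tm F N)), args.length = args'.length →
    (∀ (i : ℕ) a a', args[i]? = some a → args'[i]? = some a' →
      Relation.ReflTransGen (Step P) a a') →
    Relation.ReflTransGen (Step P) (Tm.func f (pre ++ args)) (Tm.func f (pre ++ args')) := by
  intro args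
  induction args with
  | nil =>
    intro args' pre hlen _
    rw [List.length_nil] at hlen
    rw [(List.length_eq_zero_iff.mp hlen.symm)]
  | cons a args ih =>
    intro args' pre hlen hpt
    cases args' with
    | nil => simp at hlen
    | cons a' args'' =>
      have h1 : Relation.ReflTransGen (Step P)
          (Tm.func f (pre ++ a :: args)) (Tm.func f (pre ++ a' :: args)) := by
        have hi : (pre ++ a :: args)[pre.length]? = some a := by
          rw [List.getElem?_append_right (le_refl _)]
          simp
        have := der_set (f := f) hi (hpt 0 a a' (by simp) (by simp))
        rwa [List.set_append_right _ _ (le_refl _), Nat.sub_self, List.set_cons_zero] at this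
      have h2 : Relation.ReflTransGen (Step P)
          (Tm.func f ((pre ++ [a']) ++ args)) (Tm.func f ((pre ++ [a']) ++ args'')) := by
        refine ih args'' (pre ++ [a']) (by simpa using hlen) ?_
        intro i x x' hx hx'
        exact hpt (i + 1) x x' (by simpa using hx) (by simpa using hx')
      rw [List.append_cons pre a' args'']
      simp only [List.append_assoc, List.singleton_append] at h1 h2 ⊢
      exact h1.trans h2

lemma der_congr {F N : Type} {P : Set (N × Tm F N)} {f : F} {args args' : List (Tm F N)}
    (hlen : args.length = args'.length)
    (hpt : ∀ (i : ℕ) a a', args[i]? = some a → args'[i]? = some a' →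
      Relation.ReflTransGen (Step P) a a') :
    Relation.ReflTransGen (Step P) (Tm.func f args) (Tm.func f args') := by
  simpa using der_congr_aux args args' [] hlen hpt

/-- Right-hand side `f(α_k, …, α_k)` (arity `n`, function symbol `0`). -/
def rhsA (n k : ℕ) : Tm ℕ ℕ := Tm.func 0 (List.replicate n (Tm.nt k))

noncomputable def Pf (n : ℕ) : Finset (ℕ × Tm ℕ ℕ) :=
  (Finset.range n).image (fun i => (i, rhsA n (i + 1))) ∪
  (Finset.Icc 1 n).image (fun j => ((n : ℕ), Tm.func j ([] : List (Tm ℕ ℕ))))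

noncomputable def Gn (n : ℕ) : RTG ℕ ℕ := ⟨∅, 0, ↑(Pf n)⟩

lemma mem_Pf {n : ℕ} {pr : ℕ × Tm ℕ ℕ} : pr ∈ Pf n ↔
    (∃ i < n, pr = (i, rhsA n (i + 1))) ∨
    (∃ j, 1 ≤ j ∧ j ≤ n ∧ pr = ((n : ℕ), Tm.func j ([] : List (Tm ℕ ℕ)))) := by
  simp only [Pf, Finset.mem_union, Finset.mem_image, Finset.mem_range, Finset.mem_Icc]
  constructor
  · rintro (⟨i, hi, rfl⟩ | ⟨j, ⟨h1, h2⟩, rfl⟩)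
    · exact Or.inl ⟨i, hi, rfl⟩
    · exact Or.inr ⟨j, h1, h2, rfl⟩
  · rintro (⟨i, hi, rfl⟩ | ⟨j, h1, h2, rfl⟩)
    · exact Or.inl ⟨i, hi, rfl⟩
    · exact Or.inr ⟨j, ⟨h1, h2⟩, rfl⟩

lemma card_Pf (n : ℕ) : (Pf n).card = 2 * n := by
  rw [Pf, Finset.card_union_of_disjoint, Finset.card_image_of_injective _
      (fun a b h => by simpa using (Prod.mk.injEq _ _ _ _ ▸ h).1),
    Finset.card_image_of_injective _ (fun a b h => by
      simp only [Prod.mk.injEq, Tm.func.injEq, true_and] at h; exact h.1),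
    Finset.card_range, Nat.card_Icc]
  · omega
  · rw [Finset.disjoint_left]
    rintro x hx hy
    simp only [Finset.mem_image, Finset.mem_range, Finset.mem_Icc] at hx hy
    obtain ⟨i, hi, rfl⟩ := hx
    obtain ⟨j, _, hj⟩ := hy
    have : i = n := (Prod.mk.injEq _ _ _ _ ▸ hj.symm).1
    omega

lemma occurs_rhsA {n k β : ℕ} (h : Tm.Occurs β (rhsA n k)) : β = k := by
  obtain ⟨p, hp⟩ := h
  cases hp with
  | there hi ha =>
    rename_i i a p'
    have hlt : i < n := by
      by_contra hc
      rw [List.getElem?_replicate, if_neg hc] at hi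
      exact Option.some_ne_none _ hi.symm
    rw [List.getElem?_replicate_of_lt hlt] at hi
    injection hi with hi
    rw [← hi] at ha
    cases ha; rfl

lemma acyclic_Pf (n : ℕ) : Acyclic (↑(Pf n) : Set (ℕ × Tm ℕ ℕ)) := by
  have hlt : ∀ α β : ℕ, Reach (↑(Pf n) : Set (ℕ × Tm ℕ ℕ)) α β → α < β := by
    rintro α β ⟨t, hmem, hocc⟩
    rw [Finset.mem_coe, mem_Pf] at hmem
    rcases hmem with ⟨i, hi, heq⟩ | ⟨j, _, _, heq⟩
    · obtain ⟨rfl, rfl⟩ := Prod.mk.injEq _ _ _ _ ▸ heq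
      have := occurs_rhsA hocc
      omega
    · obtain ⟨rfl, rfl⟩ := Prod.mk.injEq _ _ _ _ ▸ heq
      obtain ⟨p, hp⟩ := hocc
      cases hp with
      | there hi _ => simp at hi
  intro α h
  have : ∀ {a b : ℕ}, Relation.TransGen (Reach (↑(Pf n) : Set (ℕ × Tm ℕ ℕ))) a b → a < b := by
    intro a b h
    induction h with
    | single h => exact hlt _ _ h
    | tail _ h ih => exact ih.trans (hlt _ _ h)
  exact absurd (this h) (lt_irrefl α)

/-- The set of ground terms derivable from the non-terminal `n - m`. -/
noncomputable def Fm (n : ℕ) : ℕ → Finset (Tm ℕ ℕ)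
  | 0 => (Finset.Icc 1 n).image (fun j => Tm.func j ([] : List (Tm ℕ ℕ)))
  | m + 1 => (Fintype.piFinset (fun _ : Fin n => Fm n m)).image
      (fun g => Tm.func 0 (List.ofFn g))

lemma mem_Fm_succ {n m : ℕ} {t : Tm ℕ ℕ} : t ∈ Fm n (m + 1) ↔
    ∃ args : List (Tm ℕ ℕ), t = Tm.func 0 args ∧ args.length = n ∧
      ∀ a ∈ args, a ∈ Fm n m := by
  rw [Fm, Finset.mem_image]
  constructor
  · rintro ⟨g, hg, rfl⟩
    refine ⟨List.ofFn g, rfl, by simp, ?_⟩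
    intro a ha
    rw [List.mem_ofFn] at ha
    obtain ⟨i, rfl⟩ := ha
    exact Fintype.mem_piFinset.mp hg i
  · rintro ⟨args, rfl, hlen, hmem⟩
    refine ⟨fun i : Fin n => args[(i : ℕ)]'(by omega), ?_, ?_⟩
    · rw [Fintype.mem_piFinset]
      intro i
      exact hmem _ (List.getElem_mem _)
    · congr 1
      subst hlen
      exact List.ofFn_getElem

lemma card_Fm (n : ℕ) (hn : 1 ≤ n) : ∀ m, (Fm n m).card = n ^ n ^ m := by
  intro m
  induction m with
  | zero =>
    rw [Fm, Finset.card_image_of_injective _ (fun a b h => by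
      simp only [Tm.func.injEq, and_true] at h; exact h), Nat.card_Icc]
    simp
  | succ m ih =>
    rw [Fm, Finset.card_image_of_injective _ (fun a b h => by
        simp only [Tm.func.injEq, true_and] at h
        exact List.ofFn_injective h),
      Fintype.card_piFinset]
    simp [ih, pow_succ, ← pow_mul, mul_comm]

lemma der_to_Fm (n : ℕ) (hn : 1 ≤ n) : ∀ m, m ≤ n → ∀ t : Tm ℕ ℕ, t.IsGround →
    Relation.ReflTransGen (Step (↑(Pf n) : Set (ℕ × Tm ℕ ℕ))) (Tm.nt (n - m)) t →
    t ∈ Fm n m := by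
  intro m
  induction m with
  | zero =>
    intro _ t hg h
    rcases h.cases_head with rfl | ⟨u, hstep, hrest⟩
    · cases hg
    · obtain ⟨pr, hmem, hps⟩ := hstep
      have hpr := prodStep_nt hps
      subst hpr
      rw [Finset.mem_coe, mem_Pf] at hmem
      rcases hmem with ⟨i, hi, heq⟩ | ⟨j, hj1, hj2, heq⟩
      · have : n - 0 = i := (Prod.mk.injEq _ _ _ _ ▸ heq).1
        omega
      · have h2 : u = Tm.func j [] := (Prod.mk.injEq _ _ _ _ ▸ heq).2
        subst h2
        obtain ⟨args', rfl, hlen, _⟩ := der_func hrest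
        rw [List.length_nil, List.length_eq_zero_iff] at hlen
        subst hlen
        rw [Fm, Finset.mem_image]
        exact ⟨j, Finset.mem_Icc.mpr ⟨hj1, hj2⟩, rfl⟩
  | succ m ih =>
    intro hm t hg h
    rcases h.cases_head with rfl | ⟨u, hstep, hrest⟩
    · cases hg
    · obtain ⟨pr, hmem, hps⟩ := hstep
      have hpr := prodStep_nt hps
      subst hpr
      rw [Finset.mem_coe, mem_Pf] at hmem
      rcases hmem with ⟨i, hi, heq⟩ | ⟨j, hj1, hj2, heq⟩
      · have h1 : n - (m + 1) = i := (Prod.mk.injEq _ _ _ _ ▸ heq).1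
        have h2 : u = rhsA n (i + 1) := (Prod.mk.injEq _ _ _ _ ▸ heq).2
        have hkey : i + 1 = n - m := by omega
        subst h2
        rw [rhsA, hkey] at hrest
        obtain ⟨args', rfl, hlen, hpt⟩ := der_func hrest
        rw [List.length_replicate] at hlen
        rw [mem_Fm_succ]
        refine ⟨args', rfl, hlen, ?_⟩
        intro a ha
        obtain ⟨k, hk, hk2⟩ := List.getElem_of_mem ha
        have hk? : args'[k]? = some a := by rw [List.getElem?_eq_getElem hk, hk2]
        have hrep : (List.replicate n (Tm.nt (n - m) : Tm ℕ ℕ))[k]? =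
            some (Tm.nt (n - m)) := List.getElem?_replicate_of_lt (by omega)
        have hga : a.IsGround := by
          cases hg with
          | func h => exact h a ha
        exact ih (by omega) a hga (hpt k _ _ hrep hk?)
      · have : n - (m + 1) = n := (Prod.mk.injEq _ _ _ _ ▸ heq).1
        omega

lemma Fm_to_der (n : ℕ) (hn : 1 ≤ n) : ∀ m, m ≤ n → ∀ t : Tm ℕ ℕ, t ∈ Fm n m →
    t.IsGround ∧
    Relation.ReflTransGen (Step (↑(Pf n) : Set (ℕ × Tm ℕ ℕ))) (Tm.nt (n - m)) t := by
  intro m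
  induction m with
  | zero =>
    intro _ t ht
    rw [Fm, Finset.mem_image] at ht
    obtain ⟨j, hj, rfl⟩ := ht
    rw [Finset.mem_Icc] at hj
    constructor
    · exact Tm.IsGround.func (by simp)
    · refine Relation.ReflTransGen.single ⟨((n : ℕ), Tm.func j []), ?_, ?_⟩
      · rw [Finset.mem_coe, mem_Pf]
        exact Or.inr ⟨j, hj.1, hj.2, rfl⟩
      · have : n - 0 = n := by omega
        rw [this]
        exact ProdStep.here
  | succ m ih =>
    intro hm t ht
    rw [mem_Fm_succ] at ht
    obtain ⟨args, rfl, hlen, hmem⟩ := ht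
    have hall := fun a ha => ih (by omega) a (hmem a ha)
    constructor
    · exact Tm.IsGround.func (fun a ha => (hall a ha).1)
    · have hstep1 : Relation.ReflTransGen (Step (↑(Pf n) : Set (ℕ × Tm ℕ ℕ)))
          (Tm.nt (n - (m + 1))) (rhsA n (n - m)) := by
        refine Relation.ReflTransGen.single ⟨(n - (m + 1), rhsA n (n - (m + 1) + 1)), ?_, ?_⟩
        · rw [Finset.mem_coe, mem_Pf]
          exact Or.inl ⟨n - (m + 1), by omega, rfl⟩
        · have : n - (m + 1) + 1 = n - m := by omega
          rw [this]
          exact ProdStep.here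
      refine hstep1.trans ?_
      rw [rhsA]
      refine der_congr (by simp [hlen]) ?_
      intro i a a' ha ha'
      have hiu : i < n := by
        by_contra hc
        rw [List.getElem?_replicate, if_neg hc] at ha
        exact Option.some_ne_none _ ha.symm
      rw [List.getElem?_replicate_of_lt hiu] at ha
      injection ha with ha
      rw [← ha]
      have : a' ∈ args := by
        obtain ⟨hlt, heq⟩ := List.getElem?_eq_some_iff.mp ha'
        exact heq ▸ List.getElem_mem hlt
      exact (hall a' this).2

lemma regLang_Gn (n : ℕ) (hn : 1 ≤ n) : (Gn n).RegLang = ↑(Fm n n) := by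
  ext t
  rw [RTG.RegLang, Set.mem_setOf_eq, deriv_iff]
  constructor
  · rintro ⟨hg, hd⟩
    have : (Gn n).start = n - n := by simp [Gn]
    rw [this] at hd
    exact Finset.mem_coe.mpr (der_to_Fm n hn n le_rfl t hg hd)
  · intro ht
    obtain ⟨hg, hd⟩ := Fm_to_der n hn n le_rfl t (Finset.mem_coe.mp ht)
    refine ⟨hg, ?_⟩
    have : (Gn n).start = n - n := by simp [Gn]
    rw [this]
    exact hd

end Aux

/-- for every n ≥ 1 there is an acyclic regular tree grammar with 2n
    productions whose language has cardinality n^(n^n). -/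
theorem exists_acyclic_regular_grammar_large_language (n : ℕ) (hn : 1 ≤ n) :
    ∃ G : RTG ℕ ℕ, G.prods.Finite ∧ G.prods.ncard = 2 * n ∧ Acyclic G.prods ∧
      G.RegLang.Finite ∧ G.RegLang.ncard = n ^ (n ^ n) := by
  refine ⟨Gn n, (Pf n).finite_toSet, ?_, acyclic_Pf n, ?_, ?_⟩
  · show (↑(Pf n) : Set (ℕ × Tm ℕ ℕ)).ncard = 2 * n
    rw [Set.ncard_coe_finset, card_Pf]
  · rw [regLang_Gn n hn]
    exact (Fm n n).finite_toSet
  · rw [regLang_Gn n hn, Set.ncard_coe_finset, card_Fm n hn n]
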